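/- In the sense of Abel summation: lim_{x → 1⁻, x real} ∑_{n=1}^∞ (−1)^n (n(3n−1)/2) x^n = 1/8 and lim_{x → 1⁻, x real} ∑_{n=1}^∞ (−1)^n (n(3n+1)/2) x^n = −1/8; in particular the two Abel sums add to 0 (Euler's evaluation s = 1/8, t = −1/8 of the divergent alternating series −1 + 5 − 12 + 22 − ⋯ and −2 + 7 − 15 + 26 − ⋯ of pentagonal numbers, which agrees with his Euler-summation evaluation). -/

import Mathlib

open Filter

lemma pent_cast1 (n : ℕ) : (((n + 1) * (3 * n + 2) / 2 : ℕ) : ℝ) =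
    3 * ((n + 2).choose 2 : ℝ) - 2 * ((n + 1).choose 1 : ℝ) := by
  have h1 : 2 ∣ (n + 1) * (3 * n + 2) := by
    rcases Nat.even_or_odd n with ⟨k, hk⟩ | ⟨k, hk⟩ <;> subst hk <;>
      [exact ⟨(2*k+1)*(3*k+1), by ring⟩; exact ⟨(k+1)*(6*k+5), by ring⟩]
  have h2 : 2 ∣ (n + 2) * (n + 2 - 1) := by
    have := (Nat.even_mul_succ_self (n + 1)).two_dvd
    simpa [mul_comm] using this
  rw [Nat.choose_two_right, Nat.choose_one_right, Nat.cast_div h1 (by norm_num),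
    Nat.cast_div h2 (by norm_num)]
  push_cast [show n + 2 - 1 = n + 1 from rfl]
  ring

lemma pent_cast2 (n : ℕ) : (((n + 1) * (3 * n + 4) / 2 : ℕ) : ℝ) =
    3 * ((n + 2).choose 2 : ℝ) - 1 * ((n + 1).choose 1 : ℝ) := by
  have h1 : 2 ∣ (n + 1) * (3 * n + 4) := by
    rcases Nat.even_or_odd n with ⟨k, hk⟩ | ⟨k, hk⟩ <;> subst hk <;>
      [exact ⟨(2*k+1)*(3*k+2), by ring⟩; exact ⟨(k+1)*(6*k+7), by ring⟩]
  have h2 : 2 ∣ (n + 2) * (n + 2 - 1) := by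
    have := (Nat.even_mul_succ_self (n + 1)).two_dvd
    simpa [mul_comm] using this
  rw [Nat.choose_two_right, Nat.choose_one_right, Nat.cast_div h1 (by norm_num),
    Nat.cast_div h2 (by norm_num)]
  push_cast [show n + 2 - 1 = n + 1 from rfl]
  ring

lemma pent_hasSum (c : ℝ) {y : ℝ} (hy : ‖y‖ < 1) :
    HasSum (fun n : ℕ => (3 * ((n + 2).choose 2 : ℝ) - c * ((n + 1).choose 1 : ℝ)) * y ^ (n + 1))
      (y * (3 / (1 - y) ^ 3 - c / (1 - y) ^ 2)) := by
  have h3 := (hasSum_choose_mul_geometric_of_norm_lt_one 2 hy).mul_left 3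
  have h2 := (hasSum_choose_mul_geometric_of_norm_lt_one 1 hy).mul_left c
  have := ((h3.sub h2).mul_left y)
  convert this using 2 with n
  · rfl
  · ring
  · ring

/-- Euler's Abel-summation evaluation of the divergent alternating series of
pentagonal numbers: `-1 + 5 - 12 + 22 - ⋯ = 1/8` and `-2 + 7 - 15 + 26 - ⋯ = -1/8`. -/
theorem euler_abel_sum_pentagonal :
    Tendsto (fun x : ℝ => ∑' n : ℕ,
        (-1 : ℝ) ^ (n + 1) * (((n + 1) * (3 * n + 2) / 2 : ℕ) : ℝ) * x ^ (n + 1))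
      (nhdsWithin 1 (Set.Iio (1 : ℝ))) (nhds (1 / 8)) ∧
    Tendsto (fun x : ℝ => ∑' n : ℕ,
        (-1 : ℝ) ^ (n + 1) * (((n + 1) * (3 * n + 4) / 2 : ℕ) : ℝ) * x ^ (n + 1))
      (nhdsWithin 1 (Set.Iio (1 : ℝ))) (nhds (-(1 / 8))) := by
  have hmem : Set.Ioo (0 : ℝ) 1 ∈ nhdsWithin 1 (Set.Iio (1 : ℝ)) :=
    Ioo_mem_nhdsLT_of_mem (by constructor <;> norm_num)
  have key : ∀ x ∈ Set.Ioo (0 : ℝ) 1, ‖(-x : ℝ)‖ < 1 := by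
    intro x hx
    rw [norm_neg, Real.norm_eq_abs, abs_of_pos hx.1]
    exact hx.2
  constructor
  · have hlim : Tendsto (fun x : ℝ => (-x) * (3 / (1 - (-x)) ^ 3 - 2 / (1 - (-x)) ^ 2))
        (nhdsWithin 1 (Set.Iio (1 : ℝ))) (nhds (1 / 8)) := by
      have : ContinuousAt (fun x : ℝ => (-x) * (3 / (1 - (-x)) ^ 3 - 2 / (1 - (-x)) ^ 2)) 1 := by
        fun_prop (disch := norm_num)
      convert this.tendsto.mono_left nhdsWithin_le_nhds using 2
      norm_num
    refine hlim.congr' ?_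
    filter_upwards [hmem] with x hx
    have hs := pent_hasSum 2 (key x hx)
    rw [← hs.tsum_eq]
    apply tsum_congr
    intro n
    rw [pent_cast1 n, neg_pow]
    ring
  · have hlim : Tendsto (fun x : ℝ => (-x) * (3 / (1 - (-x)) ^ 3 - 1 / (1 - (-x)) ^ 2))
        (nhdsWithin 1 (Set.Iio (1 : ℝ))) (nhds (-(1 / 8))) := by
      have : ContinuousAt (fun x : ℝ => (-x) * (3 / (1 - (-x)) ^ 3 - 1 / (1 - (-x)) ^ 2)) 1 := by
        fun_prop (disch := norm_num)
      convert this.tendsto.mono_left nhdsWithin_le_nhds using 2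
      norm_num
    refine hlim.congr' ?_
    filter_upwards [hmem] with x hx
    have hs := pent_hasSum 1 (key x hx)
    rw [← hs.tsum_eq]
    apply tsum_congr
    intro n
    rw [pent_cast2 n, neg_pow]
    ring
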